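/- Let m ≥ 1 and n ≥ 0 be integers. For k ∈ ℤ define d_k ∈ ℚ by d_k = Σ_{i=0}^{k} C(m+k−i−1, m−1)·C(n, i) if k ≥ 0 and d_k = 0 if k < 0. Let λ°₁ ≥ λ°₂ ≥ … ≥ λ°_{m+1} ≥ 0 be integers with λ°₁ ≤ n+1, and set λ•_i = n+1 − λ°_{m+2−i} for 1 ≤ i ≤ m+1. Let M be the (2m+2) × (2m+2) matrix over ℚ with entries (for 1 ≤ i, j ≤ 2m+2): M_{i,j} = d_{λ°_{m+2−j} + j − i} if 1 ≤ j ≤ m+1, and M_{i,j} = d_{λ•_{j−m−1} − j + i} if m+2 ≤ j ≤ 2m+2. Then det M = 0. (Equivalently, the composite supersymmetric Schur polynomial specialization 𝖽_λ vanishes for every almost (m|n)-cross bipartition λ.) -/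

import Mathlib

open scoped BigOperators

/-- The specialization `𝖽_k = Σ_{i=0}^{k} C(m+k−i−1, m−1)·C(n, i)` of the complete
supersymmetric polynomial `𝐡_k` at `x_i = y_j = 1`, extended by `0` for `k < 0`. -/
def dValue (m n : ℕ) (k : ℤ) : ℚ :=
  if k < 0 then 0
  else ∑ i ∈ Finset.range (k.toNat + 1),
    ((m + k.toNat - i - 1).choose (m - 1) : ℚ) * (n.choose i : ℚ)

namespace AlmostCrossAux
open Finset

open Finset

/-- binomial coefficient with integer lower index, zero when negative. -/
def bchoose (n : ℕ) (k : ℤ) : ℚ := if k < 0 then 0 else (n.choose k.toNat : ℚ)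

/-- coefficients of `1/(1-t)^m`, extended by zero. -/
def hh (m : ℕ) (k : ℤ) : ℚ := if k < 0 then 0 else ((m + k.toNat - 1).choose (m - 1) : ℚ)

lemma hh_neg {m : ℕ} {k : ℤ} (h : k < 0) : hh m k = 0 := if_pos h

lemma bchoose_symm (n : ℕ) (k : ℤ) : bchoose n k = bchoose n (n - k) := by
  unfold bchoose
  split_ifs with h1 h2 h2
  · rfl
  · rw [Nat.choose_eq_zero_of_lt (by omega : n < ((n : ℤ) - k).toNat)]
    simp
  · rw [Nat.choose_eq_zero_of_lt (by omega : n < k.toNat)]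
    simp
  · have hk : k.toNat ≤ n := by omega
    have h3 : ((n : ℤ) - k).toNat = n - k.toNat := by omega
    rw [h3, Nat.choose_symm hk]

/-- hockey stick for `hh`. -/
lemma hh_succ_sum (m : ℕ) (hm : 1 ≤ m) (N : ℕ) (x : ℤ) (hx : x ≤ N) :
    hh (m + 1) x = ∑ l ∈ range (N + 1), hh m (x - l) := by
  rcases lt_or_ge x 0 with h | h
  · rw [hh_neg h]
    symm
    apply Finset.sum_eq_zero
    intro l _
    exact hh_neg (by omega)
  · have hxN : x.toNat ≤ N := by omega
    have hsub : range (x.toNat + 1) ⊆ range (N + 1) := range_subset_range.mpr (by omega)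
    rw [← Finset.sum_subset hsub (by
      intro l _ hl
      simp only [mem_range, not_lt] at hl
      exact hh_neg (by omega))]
    have hrefl := Finset.sum_range_reflect (fun l => hh m (x - l)) (x.toNat + 1)
    rw [← hrefl]
    have e1 : ∀ l ∈ range (x.toNat + 1),
        hh m (x - ((x.toNat + 1 - 1 - l : ℕ) : ℤ)) = ((m - 1 + l).choose (m - 1) : ℚ) := by
      intro l hl
      simp only [mem_range] at hl
      have : x - ((x.toNat + 1 - 1 - l : ℕ) : ℤ) = (l : ℤ) := by omega
      rw [this, hh, if_neg (by omega)]
      congr 2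
      omega
    rw [Finset.sum_congr rfl e1]
    rw [hh, if_neg (not_lt.mpr h)]
    have : ∑ l ∈ range (x.toNat + 1), ((m - 1 + l).choose (m - 1) : ℚ)
        = ((∑ l ∈ range (x.toNat + 1), (m - 1 + l).choose (m - 1) : ℕ) : ℚ) := by
      push_cast; rfl
    rw [this]
    have hnat : ∑ l ∈ range (x.toNat + 1), (m - 1 + l).choose (m - 1)
        = (m + 1 + x.toNat - 1).choose (m + 1 - 1) := by
      have h2 : ∑ l ∈ range (x.toNat + 1), (m - 1 + l).choose (m - 1)
          = ∑ i ∈ Ico (m - 1) (m - 1 + (x.toNat + 1)), i.choose (m - 1) := by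
        rw [Finset.sum_Ico_eq_sum_range]
        simp only [add_tsub_cancel_left]
      rw [h2]
      have h3 : Ico (m - 1) (m - 1 + (x.toNat + 1)) = Icc (m - 1) (m - 1 + x.toNat) := by
        rw [← Finset.Ico_add_one_right_eq_Icc]
        congr 1
      rw [h3, Nat.sum_Icc_choose]
      have e2 : m - 1 + x.toNat + 1 = m + 1 + x.toNat - 1 := by omega
      have e3 : m - 1 + 1 = m + 1 - 1 := by omega
      rw [e2, e3]
    rw [hnat]

/-- inverse relation: alternating binomial sums of `hh` give a delta. -/
lemma alt_hh (m : ℕ) (hm : 1 ≤ m) (k : ℤ) :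
    ∑ j ∈ range (m + 1), ((-1 : ℚ) ^ j * (m.choose j : ℚ)) * hh m (k - j)
      = if k = 0 then 1 else 0 := by
  induction m, hm using Nat.le_induction generalizing k with
  | base =>
    rw [Finset.sum_range_succ, Finset.sum_range_one]
    simp only [Nat.cast_zero, Nat.cast_one, sub_zero]
    have h0 : hh 1 k = if k < 0 then 0 else 1 := by
      unfold hh; split_ifs <;> simp
    have h1 : hh 1 (k - 1) = if k - 1 < 0 then 0 else 1 := by
      unfold hh; split_ifs <;> simp
    rw [h0, h1]
    norm_num
    split_ifs <;> first | ring1 | omega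
  | succ m hm ih =>
    set G : ℤ → ℚ := fun k =>
      ∑ j ∈ range (m + 1), ((-1 : ℚ) ^ j * (m.choose j : ℚ)) * hh (m + 1) (k - j) with hGdef
    have hG : ∀ k : ℤ, G k = if k < 0 then 0 else 1 := by
      intro k
      rcases lt_or_ge k 0 with h | h
      · rw [if_pos h]
        apply Finset.sum_eq_zero
        intro j _
        rw [hh_neg (by omega), mul_zero]
      · rw [if_neg (not_lt.mpr h)]
        have hrw : ∀ j ∈ range (m + 1),
            ((-1 : ℚ) ^ j * (m.choose j : ℚ)) * hh (m + 1) (k - j)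
              = ∑ l ∈ range (k.toNat + 1),
                  ((-1 : ℚ) ^ j * (m.choose j : ℚ)) * hh m ((k - l) - j) := by
          intro j hj
          rw [hh_succ_sum m hm k.toNat (k - j) (by omega), Finset.mul_sum]
          apply Finset.sum_congr rfl
          intro l _
          have : k - (j : ℤ) - l = k - l - j := by ring
          rw [this]
        rw [hGdef]
        simp only
        rw [Finset.sum_congr rfl hrw, Finset.sum_comm]
        have hIH : ∀ l ∈ range (k.toNat + 1),
            ∑ j ∈ range (m + 1), ((-1 : ℚ) ^ j * (m.choose j : ℚ)) * hh m ((k - l) - j)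
              = if l = k.toNat then 1 else 0 := by
          intro l hl
          simp only [mem_range] at hl
          rw [ih (k - l)]
          split_ifs with h1 h2 h2 <;> first | rfl | omega
        rw [Finset.sum_congr rfl hIH, Finset.sum_ite_eq' (range (k.toNat + 1)) k.toNat
          (fun _ => (1 : ℚ)), if_pos (by simp)]
    have harg : ∀ j : ℕ, k - ((j + 1 : ℕ) : ℤ) = (k - 1) - j := by
      intro j; push_cast; ring
    have hmain : ∑ j ∈ range (m + 1 + 1), ((-1 : ℚ) ^ j * ((m + 1).choose j : ℚ))
          * hh (m + 1) (k - j) = G k - G (k - 1) := by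
      have hGk : G k = (∑ j ∈ range m,
            ((-1 : ℚ) ^ (j + 1) * (m.choose (j + 1) : ℚ)) * hh (m + 1) ((k - 1) - j))
          + hh (m + 1) k := by
        rw [hGdef]
        simp only
        rw [Finset.sum_range_succ' (fun j => ((-1 : ℚ) ^ j * (m.choose j : ℚ))
          * hh (m + 1) (k - j)) m]
        simp only [harg]
        norm_num
      have hGk1 : G (k - 1)
          = ∑ j ∈ range (m + 1), ((-1 : ℚ) ^ j * (m.choose j : ℚ)) * hh (m + 1) ((k - 1) - j) := by
        rw [hGdef]
      rw [Finset.sum_range_succ' (fun j => ((-1 : ℚ) ^ j * ((m + 1).choose j : ℚ))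
        * hh (m + 1) (k - j)) (m + 1)]
      have hterm : ∀ j ∈ range (m + 1),
          ((-1 : ℚ) ^ (j + 1) * ((m + 1).choose (j + 1) : ℚ)) * hh (m + 1) (k - ((j + 1 : ℕ) : ℤ))
            = -(((-1 : ℚ) ^ j * (m.choose j : ℚ)) * hh (m + 1) ((k - 1) - j))
              + (-1 : ℚ) ^ (j + 1) * (m.choose (j + 1) : ℚ) * hh (m + 1) ((k - 1) - j) := by
        intro j _
        rw [harg j, Nat.choose_succ_succ]
        push_cast
        ring
      rw [Finset.sum_congr rfl hterm, Finset.sum_add_distrib, Finset.sum_neg_distrib, ← hGk1]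
      rw [Finset.sum_range_succ (fun j => (-1 : ℚ) ^ (j + 1) * (m.choose (j + 1) : ℚ)
        * hh (m + 1) ((k - 1) - j)) m]
      rw [Nat.choose_succ_self]
      rw [hGk]
      simp only [Nat.choose_zero_right, Nat.cast_one, Nat.cast_zero, sub_zero]
      ring1
    rw [hmain, hG k, hG (k - 1)]
    split_ifs <;> first | ring1 | (exfalso; omega)

lemma dValue_eq (m n : ℕ) (hm : 1 ≤ m) (k : ℤ) :
    dValue m n k = ∑ i ∈ range (n + 1), (n.choose i : ℚ) * hh m (k - i) := by
  rcases lt_or_ge k 0 with h | h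
  · rw [dValue, if_pos h]
    symm
    apply Finset.sum_eq_zero
    intro i _
    rw [hh_neg (by omega), mul_zero]
  · rw [dValue, if_neg (not_lt.mpr h)]
    have L : ∀ i ∈ range (k.toNat + 1),
        ((m + k.toNat - i - 1).choose (m - 1) : ℚ) * (n.choose i : ℚ)
          = (n.choose i : ℚ) * hh m (k - i) := by
      intro i hi
      simp only [mem_range] at hi
      rw [hh, if_neg (by omega)]
      have : m + ((k : ℤ) - i).toNat - 1 = m + k.toNat - i - 1 := by omega
      rw [this, mul_comm]
    rw [Finset.sum_congr rfl L]
    have e1 := Finset.sum_subset (range_subset_range.mpr (by omega : k.toNat + 1 ≤ k.toNat + n + 1))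
      (f := fun i => (n.choose i : ℚ) * hh m (k - i)) (by
        intro i _ hi
        simp only [mem_range, not_lt] at hi
        try dsimp only
        rw [hh_neg (by omega), mul_zero])
    have e2 := Finset.sum_subset (range_subset_range.mpr (by omega : n + 1 ≤ k.toNat + n + 1))
      (f := fun i => (n.choose i : ℚ) * hh m (k - i)) (by
        intro i _ hi
        simp only [mem_range, not_lt] at hi
        try dsimp only
        rw [Nat.choose_eq_zero_of_lt (by omega), Nat.cast_zero, zero_mul])
    rw [e1, ← e2]

lemma alt_dValue (m n : ℕ) (hm : 1 ≤ m) (k : ℤ) :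
    ∑ j ∈ range (m + 1), ((-1 : ℚ) ^ j * (m.choose j : ℚ)) * dValue m n (k - j)
      = bchoose n k := by
  have hrw : ∀ j ∈ range (m + 1),
      ((-1 : ℚ) ^ j * (m.choose j : ℚ)) * dValue m n (k - j)
        = ∑ i ∈ range (n + 1),
            (n.choose i : ℚ) * (((-1 : ℚ) ^ j * (m.choose j : ℚ)) * hh m ((k - i) - j)) := by
    intro j _
    rw [dValue_eq m n hm, Finset.mul_sum]
    apply Finset.sum_congr rfl
    intro i _
    have : k - (j : ℤ) - i = k - i - j := by ring
    rw [this]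
    ring
  rw [Finset.sum_congr rfl hrw, Finset.sum_comm]
  have h2 : ∀ i ∈ range (n + 1),
      ∑ j ∈ range (m + 1),
          (n.choose i : ℚ) * (((-1 : ℚ) ^ j * (m.choose j : ℚ)) * hh m ((k - i) - j))
        = if i = k.toNat ∧ 0 ≤ k then (n.choose i : ℚ) else 0 := by
    intro i _
    rw [← Finset.mul_sum, alt_hh m hm (k - i)]
    split_ifs with h1 h2 h2 <;>
      first
        | ring1
        | (exfalso; rw [not_and_or] at *; omega)
        | (exfalso; omega)
  rw [Finset.sum_congr rfl h2]
  by_cases hk : 0 ≤ k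
  · simp only [hk, and_true]
    rw [Finset.sum_ite_eq' (range (n + 1)) k.toNat (fun i => (n.choose i : ℚ))]
    rw [bchoose, if_neg (not_lt.mpr hk)]
    split_ifs with h
    · rfl
    · simp only [mem_range, not_lt] at h
      have hnn : n < k.toNat := by omega
      rw [Nat.choose_eq_zero_of_lt hnn, Nat.cast_zero]
  · rw [bchoose, if_pos (by omega : k < 0)]
    apply Finset.sum_eq_zero
    intro i _
    rw [if_neg (by tauto)]

lemma alt_dValue_rev (m n : ℕ) (hm : 1 ≤ m) (k : ℤ) :
    ∑ j ∈ range (m + 1), ((-1 : ℚ) ^ j * (m.choose j : ℚ)) * dValue m n (k + j)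
      = (-1 : ℚ) ^ m * bchoose n (k + m) := by
  rw [← Finset.sum_range_reflect]
  have hrw : ∀ j ∈ range (m + 1),
      ((-1 : ℚ) ^ (m + 1 - 1 - j) * (m.choose (m + 1 - 1 - j) : ℚ))
          * dValue m n (k + ((m + 1 - 1 - j : ℕ) : ℤ))
        = (-1 : ℚ) ^ m * (((-1 : ℚ) ^ j * (m.choose j : ℚ)) * dValue m n ((k + m) - j)) := by
    intro j hj
    simp only [mem_range] at hj
    have hjm : j ≤ m := by omega
    have e0 : m + 1 - 1 - j = m - j := by omega
    have e1 : (-1 : ℚ) ^ (m - j) = (-1 : ℚ) ^ m * (-1 : ℚ) ^ j := by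
      have h2 : (-1 : ℚ) ^ (m - j) * (-1 : ℚ) ^ (2 * j) = (-1 : ℚ) ^ (m + j) := by
        rw [← pow_add]
        congr 1
        omega
      have h3 : (-1 : ℚ) ^ (2 * j) = 1 := by
        rw [pow_mul]
        norm_num
      rw [h3, mul_one] at h2
      rw [h2, pow_add]
    have e2 : m.choose (m - j) = m.choose j := Nat.choose_symm hjm
    have e3 : k + ((m - j : ℕ) : ℤ) = (k + m) - j := by
      push_cast [Nat.cast_sub hjm]
      ring
    rw [e0, e1, e2, e3]
    ring
  rw [Finset.sum_congr rfl hrw, ← Finset.mul_sum, alt_dValue m n hm (k + m)]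

/-- extension of a finitely supported vector to `ℤ`. -/
def sExt (m : ℕ) (s : Fin (m + 2) → ℚ) (k : ℤ) : ℚ :=
  if h : 0 ≤ k ∧ k < m + 2 then s ⟨k.toNat, by omega⟩ else 0

lemma sExt_coe (m : ℕ) (s : Fin (m + 2) → ℚ) (i : Fin (m + 2)) :
    sExt m s ((i : ℕ) : ℤ) = s i := by
  rw [sExt, dif_pos (by constructor <;> omega)]
  congr 1

lemma sExt_nat (m : ℕ) (s : Fin (m + 2) → ℚ) (i : ℕ) (hi : i < m + 2) :
    sExt m s (i : ℤ) = s ⟨i, hi⟩ := by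
  rw [sExt, dif_pos (by constructor <;> omega)]
  congr 1

/-- nontrivial solution of `m+1` homogeneous linear conditions in `m+2` unknowns. -/
lemma exists_s (m n : ℕ) (X : Fin (m + 1) → ℤ) :
    ∃ s : Fin (m + 2) → ℚ, s ≠ 0 ∧
      ∀ c : Fin (m + 1), ∑ i : Fin (m + 2), s i * bchoose n (X c - (i : ℕ)) = 0 := by
  set B : Matrix (Fin (m + 2)) (Fin (m + 2)) ℚ := Matrix.of fun i c =>
    if h : (c : ℕ) < m + 1 then bchoose n (X ⟨(c : ℕ), h⟩ - (i : ℕ)) else 0 with hB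
  have hdet : B.det = 0 := by
    apply Matrix.det_eq_zero_of_column_eq_zero ⟨m + 1, by omega⟩
    intro i
    rw [hB]
    simp only [Matrix.of_apply]
    rw [dif_neg (by simp)]
  obtain ⟨v, hv0, hv⟩ := Matrix.exists_vecMul_eq_zero_iff.mpr hdet
  refine ⟨v, hv0, fun c => ?_⟩
  have h2 := congrFun hv ⟨(c : ℕ), by omega⟩
  rw [Matrix.vecMul, Pi.zero_apply] at h2
  rw [← h2]
  unfold dotProduct
  apply Finset.sum_congr rfl
  intro i _
  rw [hB]
  simp only [Matrix.of_apply]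
  rw [dif_pos (by exact c.isLt)]

/-- shift/convolution exchange. -/
lemma shift_sum (m : ℕ) (s : Fin (m + 2) → ℚ) (j : ℕ) (hj : j ≤ m) (g : ℕ → ℚ) :
    ∑ a ∈ range (2 * m + 2), sExt m s ((a : ℤ) - j) * g a
      = ∑ i ∈ range (m + 2), sExt m s (i : ℤ) * g (i + j) := by
  have h1 : ∑ i ∈ range (m + 2), sExt m s (i : ℤ) * g (i + j)
      = ∑ a ∈ Ico j (j + (m + 2)), sExt m s ((a : ℤ) - j) * g a := by
    rw [Finset.sum_Ico_eq_sum_range]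
    simp only [add_tsub_cancel_left]
    apply Finset.sum_congr rfl
    intro i _
    have e1 : ((j + i : ℕ) : ℤ) - j = (i : ℤ) := by push_cast; ring
    rw [e1, add_comm j i]
  rw [h1]
  apply (Finset.sum_subset (by
    intro x hx
    simp only [mem_Ico] at hx
    simp only [mem_range]
    omega) ?_).symm
  intro x _ hx
  simp only [mem_Ico, not_and_or, not_le, not_lt] at hx
  rw [sExt, dif_neg (by omega), zero_mul]

/-- exchanging the double convolution. -/
lemma key_swap (m : ℕ) (s : Fin (m + 2) → ℚ) (g : ℕ → ℚ) :
    ∑ a ∈ range (2 * m + 2),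
        (∑ j ∈ range (m + 1), ((-1 : ℚ) ^ j * (m.choose j : ℚ)) * sExt m s ((a : ℤ) - j)) * g a
      = ∑ i ∈ range (m + 2), sExt m s (i : ℤ)
          * (∑ j ∈ range (m + 1), ((-1 : ℚ) ^ j * (m.choose j : ℚ)) * g (i + j)) := by
  have h1 : ∀ a ∈ range (2 * m + 2),
      (∑ j ∈ range (m + 1), ((-1 : ℚ) ^ j * (m.choose j : ℚ)) * sExt m s ((a : ℤ) - j)) * g a
        = ∑ j ∈ range (m + 1),
            ((-1 : ℚ) ^ j * (m.choose j : ℚ)) * (sExt m s ((a : ℤ) - j) * g a) := by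
    intro a _
    rw [Finset.sum_mul]
    apply Finset.sum_congr rfl
    intro j _
    ring
  rw [Finset.sum_congr rfl h1, Finset.sum_comm]
  have h2 : ∀ j ∈ range (m + 1),
      ∑ a ∈ range (2 * m + 2), ((-1 : ℚ) ^ j * (m.choose j : ℚ)) * (sExt m s ((a : ℤ) - j) * g a)
        = ∑ i ∈ range (m + 2),
            ((-1 : ℚ) ^ j * (m.choose j : ℚ)) * (sExt m s (i : ℤ) * g (i + j)) := by
    intro j hj
    simp only [mem_range] at hj
    rw [← Finset.mul_sum, ← Finset.mul_sum, shift_sum m s j (by omega) g]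
  rw [Finset.sum_congr rfl h2, Finset.sum_comm]
  apply Finset.sum_congr rfl
  intro i _
  rw [Finset.mul_sum]
  apply Finset.sum_congr rfl
  intro j _
  ring

end AlmostCrossAux

/-- the determinantal evaluation `𝖽_λ` of the composite supersymmetric
Schur polynomial vanishes for every almost `(m|n)`-cross bipartition `λ`.  Here
`λ° : {1, …, m+1} → ℕ` is encoded by `lw` (weakly decreasing, `λ°₁ ≤ n+1`),
`λ•_i = n+1 − λ°_{m+2−i}`, and `M` is the `(2m+2) × (2m+2)` matrix with entries
`M_{i,j} = 𝖽_{λ°_{m+2−j}+j−i}` for `1 ≤ j ≤ m+1` and `M_{i,j} = 𝖽_{λ•_{j−m−1}−j+i}` for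
`m+2 ≤ j ≤ 2m+2` (indices `i, j` one-based; the `Fin`-indices `a = i−1`, `b = j−1` below
are zero-based). -/
theorem det_almost_cross_eq_zero
    (m n : ℕ) (hm : 1 ≤ m) (lw : ℕ → ℕ)
    (hdec : ∀ i, 1 ≤ i → i ≤ m → lw (i + 1) ≤ lw i)
    (hle : lw 1 ≤ n + 1) :
    Matrix.det (Matrix.of fun a b : Fin (2 * m + 2) =>
      if (b : ℕ) ≤ m then
        dValue m n ((lw (m + 1 - (b : ℕ)) : ℤ) + (b : ℕ) - (a : ℕ))
      else
        dValue m n (((n + 1 - lw (2 * m + 2 - (b : ℕ)) : ℕ) : ℤ) + (a : ℕ) - (b : ℕ)))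
      = 0 := by
  classical
  have hb2 : 2 * m + 2 = m + 1 + (m + 1) := by omega
  -- all parts are at most n+1
  have hmono : ∀ j, 1 ≤ j → j ≤ m + 1 → lw j ≤ n + 1 := by
    have hchain : ∀ j, 1 ≤ j → j ≤ m + 1 → lw j ≤ lw 1 := by
      intro j h1 h2
      induction j with
      | zero => omega
      | succ i ih =>
        rcases Nat.eq_zero_or_pos i with hi | hi
        · subst hi; exact le_rfl
        · exact le_trans (hdec i hi (by omega)) (ih hi (by omega))
    intro j h1 h2
    exact le_trans (hchain j h1 h2) hle
  set X : Fin (m + 1) → ℤ := fun c => (lw (m + 1 - (c : ℕ)) : ℤ) + ((c : ℕ) : ℤ) with hX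
  obtain ⟨s, hs0, hs⟩ := AlmostCrossAux.exists_s m n X
  rw [← Matrix.exists_vecMul_eq_zero_iff]
  refine ⟨fun a : Fin (2 * m + 2) => ∑ j ∈ Finset.range (m + 1),
      ((-1 : ℚ) ^ j * (m.choose j : ℚ)) * AlmostCrossAux.sExt m s (((a : ℕ) : ℤ) - j),
    ?_, ?_⟩
  · -- the row vector is nonzero
    intro hzero
    have hex : ∃ i : Fin (m + 2), s i ≠ 0 := by
      by_contra h
      push_neg at h
      exact hs0 (funext fun i => h i)
    set T : Finset (Fin (m + 2)) := Finset.univ.filter (fun i => s i ≠ 0) with hT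
    have hTne : T.Nonempty := ⟨hex.choose, by simp [hT, hex.choose_spec]⟩
    set i0 := T.max' hTne with hi0
    have hi0ne : s i0 ≠ 0 := by
      have h := Finset.mem_filter.mp (T.max'_mem hTne)
      exact h.2
    have hmax : ∀ i : Fin (m + 2), i0 < i → s i = 0 := by
      intro i hi
      by_contra hne
      have hmem : i ∈ T := by simp [hT, hne]
      exact absurd (Finset.le_max' T i hmem) (not_le.mpr hi)
    have hva := congrFun hzero ⟨(i0 : ℕ) + m, by omega⟩
    rw [Pi.zero_apply] at hva
    rw [Finset.sum_eq_single_of_mem m (by simp)] at hva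
    · have harg : (((⟨(i0 : ℕ) + m, by omega⟩ : Fin (2 * m + 2)) : ℕ) : ℤ) - (m : ℕ)
          = ((i0 : ℕ) : ℤ) := by
        push_cast
        ring
      rw [harg, AlmostCrossAux.sExt_coe, Nat.choose_self] at hva
      have h9 : (-1 : ℚ) ^ m ≠ 0 := pow_ne_zero m (by norm_num)
      rcases mul_eq_zero.mp hva with h | h
      · rcases mul_eq_zero.mp h with h' | h'
        · exact h9 h'
        · norm_num at h'
      · exact hi0ne h
    · intro j hj hne
      simp only [Finset.mem_range] at hj
      have hjm : j ≤ m := by omega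
      rcases lt_or_ge ((i0 : ℕ) + (m - j)) (m + 2) with hlt | hge
      · have harg : (((⟨(i0 : ℕ) + m, by omega⟩ : Fin (2 * m + 2)) : ℕ) : ℤ) - (j : ℕ)
            = (((i0 : ℕ) + (m - j) : ℕ) : ℤ) := by
          push_cast [Nat.cast_sub hjm]
          ring
        rw [harg, AlmostCrossAux.sExt_nat m s _ hlt,
          hmax ⟨(i0 : ℕ) + (m - j), hlt⟩ (by rw [Fin.lt_def]; simp; omega), mul_zero]
      · rw [AlmostCrossAux.sExt, dif_neg (by push_cast; omega), mul_zero]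
  · -- it kills every column
    funext b
    rw [Matrix.vecMul, Pi.zero_apply]
    unfold dotProduct
    simp only [Matrix.of_apply]
    rw [Fin.sum_univ_eq_sum_range (fun a : ℕ =>
      (∑ j ∈ Finset.range (m + 1),
        ((-1 : ℚ) ^ j * (m.choose j : ℚ)) * AlmostCrossAux.sExt m s ((a : ℤ) - j)) *
      (if (b : ℕ) ≤ m then
        dValue m n ((lw (m + 1 - (b : ℕ)) : ℤ) + ((b : ℕ) : ℤ) - (a : ℤ))
      else
        dValue m n (((n + 1 - lw (2 * m + 2 - (b : ℕ)) : ℕ) : ℤ) + (a : ℤ) - ((b : ℕ) : ℤ))))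
      (2 * m + 2)]
    rw [AlmostCrossAux.key_swap m s]
    rcases le_or_gt (b : ℕ) m with hb | hb
    · -- left block columns
      set c : Fin (m + 1) := ⟨(b : ℕ), by omega⟩ with hc
      have hinner : ∀ i ∈ Finset.range (m + 2),
          AlmostCrossAux.sExt m s (i : ℤ) *
            (∑ j ∈ Finset.range (m + 1), ((-1 : ℚ) ^ j * (m.choose j : ℚ)) *
              (if (b : ℕ) ≤ m then
                dValue m n ((lw (m + 1 - (b : ℕ)) : ℤ) + ((b : ℕ) : ℤ) - ((i + j : ℕ) : ℤ))
              else
                dValue m n (((n + 1 - lw (2 * m + 2 - (b : ℕ)) : ℕ) : ℤ)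
                  + ((i + j : ℕ) : ℤ) - ((b : ℕ) : ℤ))))
          = AlmostCrossAux.sExt m s (i : ℤ) * AlmostCrossAux.bchoose n (X c - (i : ℤ)) := by
        intro i _
        congr 1
        have hterm : ∀ j ∈ Finset.range (m + 1),
            ((-1 : ℚ) ^ j * (m.choose j : ℚ)) *
              (if (b : ℕ) ≤ m then
                dValue m n ((lw (m + 1 - (b : ℕ)) : ℤ) + ((b : ℕ) : ℤ) - ((i + j : ℕ) : ℤ))
              else
                dValue m n (((n + 1 - lw (2 * m + 2 - (b : ℕ)) : ℕ) : ℤ)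
                  + ((i + j : ℕ) : ℤ) - ((b : ℕ) : ℤ)))
            = ((-1 : ℚ) ^ j * (m.choose j : ℚ)) * dValue m n ((X c - (i : ℤ)) - j) := by
          intro j _
          rw [if_pos hb]
          congr 1
          rw [hX]
          simp only [hc]
          push_cast
          ring
        rw [Finset.sum_congr rfl hterm, AlmostCrossAux.alt_dValue m n hm (X c - (i : ℤ))]
      rw [Finset.sum_congr rfl hinner]
      rw [← Fin.sum_univ_eq_sum_range (fun i : ℕ =>
        AlmostCrossAux.sExt m s (i : ℤ) * AlmostCrossAux.bchoose n (X c - (i : ℤ))) (m + 2)]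
      rw [← hs c]
      apply Finset.sum_congr rfl
      intro i _
      rw [AlmostCrossAux.sExt_coe]
    · -- right block columns
      set c : Fin (m + 1) := ⟨(b : ℕ) - (m + 1), by omega⟩ with hc
      have hlwle : lw (2 * m + 2 - (b : ℕ)) ≤ n + 1 := by
        apply hmono <;> omega
      have hinner : ∀ i ∈ Finset.range (m + 2),
          AlmostCrossAux.sExt m s (i : ℤ) *
            (∑ j ∈ Finset.range (m + 1), ((-1 : ℚ) ^ j * (m.choose j : ℚ)) *
              (if (b : ℕ) ≤ m then
                dValue m n ((lw (m + 1 - (b : ℕ)) : ℤ) + ((b : ℕ) : ℤ) - ((i + j : ℕ) : ℤ))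
              else
                dValue m n (((n + 1 - lw (2 * m + 2 - (b : ℕ)) : ℕ) : ℤ)
                  + ((i + j : ℕ) : ℤ) - ((b : ℕ) : ℤ))))
          = (-1 : ℚ) ^ m *
              (AlmostCrossAux.sExt m s (i : ℤ) * AlmostCrossAux.bchoose n (X c - (i : ℤ))) := by
        intro i _
        have hterm : ∀ j ∈ Finset.range (m + 1),
            ((-1 : ℚ) ^ j * (m.choose j : ℚ)) *
              (if (b : ℕ) ≤ m then
                dValue m n ((lw (m + 1 - (b : ℕ)) : ℤ) + ((b : ℕ) : ℤ) - ((i + j : ℕ) : ℤ))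
              else
                dValue m n (((n + 1 - lw (2 * m + 2 - (b : ℕ)) : ℕ) : ℤ)
                  + ((i + j : ℕ) : ℤ) - ((b : ℕ) : ℤ)))
            = ((-1 : ℚ) ^ j * (m.choose j : ℚ)) * dValue m n
                (((((n + 1 - lw (2 * m + 2 - (b : ℕ)) : ℕ) : ℤ) + (i : ℤ) - ((b : ℕ) : ℤ))) + j) := by
          intro j _
          rw [if_neg (by omega)]
          congr 1
          push_cast
          ring
        rw [Finset.sum_congr rfl hterm, AlmostCrossAux.alt_dValue_rev m n hm]
        rw [AlmostCrossAux.bchoose_symm]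
        have hargeq : (n : ℤ) - ((((n + 1 - lw (2 * m + 2 - (b : ℕ)) : ℕ) : ℤ)
              + (i : ℤ) - ((b : ℕ) : ℤ)) + (m : ℕ)) = X c - (i : ℤ) := by
          rw [hX]
          simp only [hc]
          have e1 : ((n + 1 - lw (2 * m + 2 - (b : ℕ)) : ℕ) : ℤ)
              = (n : ℤ) + 1 - (lw (2 * m + 2 - (b : ℕ)) : ℤ) := by
            push_cast [Nat.cast_sub hlwle]
            ring
          have e2 : m + 1 - ((b : ℕ) - (m + 1)) = 2 * m + 2 - (b : ℕ) := by omega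
          have e3 : (((b : ℕ) - (m + 1) : ℕ) : ℤ) = ((b : ℕ) : ℤ) - (m + 1) := by
            have : m + 1 ≤ (b : ℕ) := by omega
            push_cast [Nat.cast_sub this]
            ring
          rw [e1, e2, e3]
          push_cast
          ring
        rw [hargeq]
        ring
      rw [Finset.sum_congr rfl hinner, ← Finset.mul_sum]
      rw [← Fin.sum_univ_eq_sum_range (fun i : ℕ =>
        AlmostCrossAux.sExt m s (i : ℤ) * AlmostCrossAux.bchoose n (X c - (i : ℤ))) (m + 2)]
      have : (∑ i : Fin (m + 2),
          AlmostCrossAux.sExt m s ((i : ℕ) : ℤ) * AlmostCrossAux.bchoose n (X c - ((i : ℕ) : ℤ)))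
          = 0 := by
        rw [← hs c]
        apply Finset.sum_congr rfl
        intro i _
        rw [AlmostCrossAux.sExt_coe]
      rw [this, mul_zero]
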